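/- Every smooth word u of height k can be extended on the right by a single letter to a smooth word of height k, or u is the last member of its maximal right smooth extension chain; moreover each smooth word of height k belongs to exactly one maximal right smooth extension chain of height k (the MRSE chains of height k form a partition of P^k(ε)). -/

import Mathlib

/-- Run lengths of a word: lengths of maximal blocks of equal letters. -/
def runLengths (w : List ℕ) : List ℕ :=
  (w.splitBy (· = ·)).map List.length

/-- The run-length derivative: run lengths, discarding the first and/or last
run if it has length one. -/
def wderiv (w : List ℕ) : List ℕ :=
  let r := runLengths w
  let r1 := if r.head? = some 1 then r.tail else r
  if r1.getLast? = some 1 then r1.dropLast else r1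

/-- `w` is a word over the alphabet {1,2}. -/
def IsWord (w : List ℕ) : Prop := ∀ a ∈ w, a = 1 ∨ a = 2

/-- `w` is differentiable: a word over {1,2} avoiding 111 and 222. -/
def Differentiable' (w : List ℕ) : Prop :=
  IsWord w ∧ ¬ ([1,1,1] <:+: w) ∧ ¬ ([2,2,2] <:+: w)

/-- `w` is smooth (C^∞): arbitrarily often differentiable. -/
def SmoothWord (w : List ℕ) : Prop := ∀ k : ℕ, Differentiable' (wderiv^[k] w)

/-- The height of a smooth word: least `k` with `D^k(w) = ε`. -/
noncomputable def height (w : List ℕ) : ℕ := sInf {k | wderiv^[k] w = []}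

/-- `P^k(ε)`: the set of smooth words of height `k`. -/
def Pk (k : ℕ) : Set (List ℕ) := {w | SmoothWord w ∧ height w = k}

/-- `v` is a primitive of `w`: a smooth word with `D(v) = w`. -/
def Primitive (v w : List ℕ) : Prop := SmoothWord v ∧ wderiv v = w

/-- Simple right extension: `w = uα` for a letter `α ∈ {1,2}`. -/
def SRE (u w : List ℕ) : Prop := ∃ α, (α = 1 ∨ α = 2) ∧ w = u ++ [α]

/-- Maximal right smooth extension (MRSE) chain of height `k`,
represented as the (nonempty) list of its members. -/
def MRSE (k : ℕ) (c : List (List ℕ)) : Prop :=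
  c ≠ [] ∧ (∀ u ∈ c, u ∈ Pk k) ∧ c.Chain' SRE ∧
  (∀ v ∈ Pk k, ∀ u₁, c.head? = some u₁ → ¬ SRE v u₁) ∧
  (∀ v ∈ Pk k, ∀ um, c.getLast? = some um → ¬ SRE um v)

/-- `H^k`: the set of MRSE chains of height `k`. -/
def Hset (k : ℕ) : Set (List (List ℕ)) := {c | MRSE k c}

/-- Letter complement: swaps 1 and 2. -/
def bar (a : ℕ) : ℕ := if a = 1 then 2 else 1

namespace MRSEaux
open List

variable {R : ℕ → ℕ → Bool}

/-- recursive version of splitBy -/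
def sF (R : ℕ → ℕ → Bool) : List ℕ → List (List ℕ)
  | [] => []
  | [a] => [[a]]
  | a :: b :: l =>
    if R a b then (a :: (sF R (b :: l)).headI) :: (sF R (b :: l)).tail
    else [a] :: sF R (b :: l)

lemma sF_ne_nil (a : ℕ) (l : List ℕ) : sF R (a :: l) ≠ [] := by
  cases l with
  | nil => simp [sF]
  | cons b l => rw [sF]; split <;> simp

lemma loop_append (l : List ℕ) (a : ℕ) (g : List ℕ) (gs : List (List ℕ)) :
    splitBy.loop R l a g gs = gs.reverse ++ splitBy.loop R l a g [] := by
  induction l generalizing a g gs with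
  | nil => simp [splitBy.loop]
  | cons b l ih =>
    rw [splitBy.loop, splitBy.loop]
    split
    · exact ih _ _ _
    · rw [ih _ _ [(a :: g).reverse], ih _ _ ((a :: g).reverse :: gs)]
      simp

lemma loop_eq_sF (l : List ℕ) (a : ℕ) (g : List ℕ) :
    splitBy.loop R l a g [] = (g.reverse ++ (sF R (a :: l)).headI) :: (sF R (a :: l)).tail := by
  induction l generalizing a g with
  | nil => simp [splitBy.loop, sF]
  | cons b l ih =>
    rw [splitBy.loop]
    obtain ⟨h, t, hht⟩ : ∃ h t, sF R (b :: l) = h :: t :=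
      List.exists_cons_of_ne_nil (sF_ne_nil b l)
    split
    · rename_i hR
      rw [ih b (a :: g)]
      rw [show sF R (a :: b :: l) = (a :: (sF R (b :: l)).headI) :: (sF R (b :: l)).tail from by rw [sF]; simp [hR]]
      simp [hht]
    · rename_i hR
      rw [loop_append, ih b []]
      rw [show sF R (a :: b :: l) = [a] :: sF R (b :: l) from by rw [sF]; simp [hR]]
      simp [hht]

lemma splitBy_eq_sF (l : List ℕ) : splitBy R l = sF R l := by
  cases l with
  | nil => rfl
  | cons a l =>
    rw [show splitBy R (a :: l) = splitBy.loop R l a [] [] from rfl, loop_eq_sF]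
    obtain ⟨h, t, hht⟩ : ∃ h t, sF R (a :: l) = h :: t :=
      List.exists_cons_of_ne_nil (sF_ne_nil a l)
    simp [hht]

end MRSEaux

open List MRSEaux

lemma runLengths_eq_sF (w : List ℕ) :
    runLengths w = (sF (fun a b => a = b) w).map List.length := by
  rw [runLengths, splitBy_eq_sF]

@[simp] lemma runLengths_nil : runLengths [] = [] := rfl

@[simp] lemma runLengths_singleton (a : ℕ) : runLengths [a] = [1] := by
  rw [runLengths_eq_sF]; rfl

lemma runLengths_ne_nil (a : ℕ) (l : List ℕ) : runLengths (a :: l) ≠ [] := by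
  rw [runLengths_eq_sF]
  simp [sF_ne_nil]

lemma runLengths_cons_cons (a b : ℕ) (l : List ℕ) :
    runLengths (a :: b :: l) =
      if a = b then ((runLengths (b :: l)).headI + 1) :: (runLengths (b :: l)).tail
      else 1 :: runLengths (b :: l) := by
  obtain ⟨h, t, hht⟩ : ∃ h t, sF (fun a b : ℕ => a = b) (b :: l) = h :: t :=
    List.exists_cons_of_ne_nil (sF_ne_nil b l)
  rw [runLengths_eq_sF, runLengths_eq_sF, sF]
  split
  · rename_i hR
    simp only [decide_eq_true_eq] at hR
    rw [if_pos hR]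
    simp [hht]
  · rename_i hR
    simp only [decide_eq_true_eq] at hR
    rw [if_neg hR]
    simp [hht]

lemma runLengths_concat_ne (w : List ℕ) (a : ℕ) (h : w.getLast? ≠ some a) :
    runLengths (w ++ [a]) = runLengths w ++ [1] := by
  induction w with
  | nil => simp
  | cons b w ih =>
    cases w with
    | nil =>
      simp only [getLast?_singleton, ne_eq, Option.some.injEq] at h
      simp [runLengths_cons_cons, h]
    | cons c l =>
      have h' : (c :: l).getLast? ≠ some a := by
        rwa [getLast?_cons_cons] at h
      obtain ⟨x, t, hxt⟩ : ∃ x t, runLengths (c :: l) = x :: t :=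
        List.exists_cons_of_ne_nil (runLengths_ne_nil c l)
      have h2 := ih h'
      simp only [List.cons_append] at h2 ⊢
      rw [runLengths_cons_cons, h2, hxt, runLengths_cons_cons, hxt]
      split <;> simp

lemma runLengths_concat_eq (w : List ℕ) (a : ℕ) (h : w.getLast? = some a) :
    ∃ d n, runLengths w = d ++ [n] ∧ runLengths (w ++ [a]) = d ++ [n + 1] := by
  induction w with
  | nil => simp at h
  | cons b w ih =>
    cases w with
    | nil =>
      simp only [getLast?_singleton, Option.some.injEq] at h
      subst h
      exact ⟨[], 1, by simp, by simp [runLengths_cons_cons]⟩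
    | cons c l =>
      have h' : (c :: l).getLast? = some a := by rwa [getLast?_cons_cons] at h
      obtain ⟨d, n, h1, h2⟩ := ih h'
      simp only [List.cons_append] at h2 ⊢
      rw [runLengths_cons_cons, runLengths_cons_cons, h1, h2]
      cases d with
      | nil =>
        by_cases hbc : b = c
        · exact ⟨[], n + 1, by simp [hbc], by simp [hbc]⟩
        · exact ⟨[1], n, by simp [hbc], by simp [hbc]⟩
      | cons e d₂ =>
        refine ⟨if b = c then (e+1) :: d₂ else 1 :: e :: d₂, n, ?_, ?_⟩ <;> split <;> simp

lemma runLengths_pos (w : List ℕ) : ∀ x ∈ runLengths w, 1 ≤ x := by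
  induction w with
  | nil => simp
  | cons b w ih =>
    cases w with
    | nil => simp
    | cons c l =>
      obtain ⟨x, t, hxt⟩ : ∃ x t, runLengths (c :: l) = x :: t :=
        List.exists_cons_of_ne_nil (runLengths_ne_nil c l)
      rw [runLengths_cons_cons, hxt]
      rw [hxt] at ih
      split
      · intro y hy
        rcases mem_cons.1 hy with rfl | hy
        · simp
        · exact ih y (mem_cons_of_mem _ hy)
      · intro y hy
        rcases mem_cons.1 hy with rfl | hy
        · exact le_refl 1
        · exact ih y hy

lemma sum_runLengths (w : List ℕ) : (runLengths w).sum = w.length := by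
  induction w with
  | nil => simp
  | cons b w ih =>
    cases w with
    | nil => simp
    | cons c l =>
      obtain ⟨x, t, hxt⟩ : ∃ x t, runLengths (c :: l) = x :: t :=
        List.exists_cons_of_ne_nil (runLengths_ne_nil c l)
      rw [runLengths_cons_cons, hxt]
      rw [hxt] at ih
      split <;> simp_all [List.sum_cons] <;> omega

lemma head_run2 (a : ℕ) (l : List ℕ) (h : 2 ≤ (runLengths (a :: l)).headI) :
    ∃ l', l = a :: l' := by
  cases l with
  | nil => simp at h
  | cons b l =>
    rw [runLengths_cons_cons] at h
    by_cases hab : a = b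
    · exact ⟨l, by rw [hab]⟩
    · rw [if_neg hab] at h; simp at h

lemma triple_of_mem_runLengths (w : List ℕ) :
    ∀ x ∈ runLengths w, 3 ≤ x → ∃ c, [c, c, c] <:+: w := by
  induction w with
  | nil => simp
  | cons b w ih =>
    cases w with
    | nil => intro y hy h3; simp at hy; omega
    | cons c l =>
      obtain ⟨x, t, hxt⟩ : ∃ x t, runLengths (c :: l) = x :: t :=
        List.exists_cons_of_ne_nil (runLengths_ne_nil c l)
      intro y hy h3
      rw [runLengths_cons_cons, hxt] at hy
      have hsub : y ∈ runLengths (c :: l) → ∃ c', [c', c', c'] <:+: b :: c :: l := by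
        intro hmem
        obtain ⟨c', hc'⟩ := ih y hmem h3
        exact ⟨c', hc'.trans (by exact ⟨[b], [], by simp⟩ : (c :: l) <:+: b :: c :: l)⟩
      split at hy
      · rename_i hbc
        rcases mem_cons.1 hy with rfl | hy
        · -- head run of length ≥ 3
          subst hbc
          have h2 : 2 ≤ (runLengths (b :: l)).headI := by
            rw [hxt]
            simp only [List.headI] at h3 ⊢
            omega
          obtain ⟨l', rfl⟩ := head_run2 b l h2
          exact ⟨b, ⟨[], l', by simp⟩⟩
        · exact hsub (by rw [hxt]; exact mem_cons_of_mem _ hy)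
      · rcases mem_cons.1 hy with rfl | hy
        · omega
        · exact hsub (by rw [hxt]; exact hy)

lemma runLengths_le_two {w : List ℕ} (hw : ∀ a ∈ w, a = 1 ∨ a = 2)
    (h1 : ¬ ([1,1,1] <:+: w)) (h2 : ¬ ([2,2,2] <:+: w)) :
    ∀ x ∈ runLengths w, x ≤ 2 := by
  intro x hx
  by_contra hgt
  obtain ⟨c, hc⟩ := triple_of_mem_runLengths w x hx (by omega)
  have hcw : c ∈ w := hc.mem (by simp)
  rcases hw c hcw with rfl | rfl
  · exact h1 hc
  · exact h2 hc

/-! ### wderiv basics -/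

def tIf1 (r : List ℕ) : List ℕ := if r.head? = some 1 then r.tail else r
def dIf1 (r : List ℕ) : List ℕ := if r.getLast? = some 1 then r.dropLast else r

lemma wderiv_def (w : List ℕ) : wderiv w = dIf1 (tIf1 (runLengths w)) := rfl

@[simp] lemma wderiv_nil : wderiv [] = [] := rfl

lemma tIf1_append (r s : List ℕ) (hr : r ≠ []) : tIf1 (r ++ s) = tIf1 r ++ s := by
  unfold tIf1
  rw [head?_append_of_ne_nil r hr]
  split
  · rw [List.tail_append_of_ne_nil] <;> assumption
  · rfl

lemma dIf1_concat1 (r : List ℕ) : dIf1 (r ++ [1]) = r := by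
  unfold dIf1
  rw [getLast?_concat, if_pos rfl, dropLast_concat]

lemma dIf1_concat2 (r : List ℕ) : dIf1 (r ++ [2]) = r ++ [2] := by
  unfold dIf1
  rw [getLast?_concat]
  simp

lemma length_wderiv_lt (w : List ℕ) (hw : w ≠ []) : (wderiv w).length < w.length := by
  obtain ⟨a, l, rfl⟩ := List.exists_cons_of_ne_nil hw
  have hpos := runLengths_pos (a :: l)
  have hsum := sum_runLengths (a :: l)
  have hne := runLengths_ne_nil a l
  have hlen : (runLengths (a :: l)).length ≤ (runLengths (a :: l)).sum :=
    List.length_le_sum_of_one_le _ hpos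
  rw [wderiv_def]
  have hd : ∀ r : List ℕ, (dIf1 r).length ≤ r.length := by
    intro r; unfold dIf1; split
    · exact (List.length_dropLast (xs := r)) ▸ Nat.sub_le _ _
    · exact le_refl _
  have ht : (tIf1 (runLengths (a :: l))).length < (a :: l).length := by
    unfold tIf1
    split
    · rename_i hh
      rw [List.length_tail]
      have : 1 ≤ (runLengths (a :: l)).length := by
        cases h : runLengths (a :: l); · exact absurd h hne
        simp
      omega
    · rename_i hh
      -- head is ≥ 2, so sum > length
      obtain ⟨x, t, hxt⟩ : ∃ x t, runLengths (a :: l) = x :: t :=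
        List.exists_cons_of_ne_nil hne
      have hx1 : 1 ≤ x := hpos x (by rw [hxt]; simp)
      have hx2 : x ≠ 1 := by
        intro h; rw [hxt, h] at hh; simp at hh
      have htl : t.length ≤ t.sum := List.length_le_sum_of_one_le _
        (fun y hy => hpos y (by rw [hxt]; exact mem_cons_of_mem _ hy))
      rw [hxt] at hsum ⊢
      simp only [List.length_cons, List.sum_cons] at hsum ⊢
      omega
  exact lt_of_le_of_lt (hd _) ht

/-! ### height -/

lemma exists_iter_nil (w : List ℕ) : ∃ k, wderiv^[k] w = [] := by
  suffices h : ∀ n (w : List ℕ), w.length ≤ n → ∃ k, wderiv^[k] w = [] from h w.length w le_rfl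
  intro n
  induction n with
  | zero =>
    intro w hw
    have : w = [] := List.eq_nil_of_length_eq_zero (by omega)
    exact ⟨0, this⟩
  | succ n ih =>
    intro w hw
    rcases eq_or_ne w [] with rfl | hne
    · exact ⟨0, rfl⟩
    · obtain ⟨k, hk⟩ := ih (wderiv w) (by have := length_wderiv_lt w hne; omega)
      exact ⟨k + 1, by rwa [Function.iterate_succ_apply]⟩

@[simp] lemma height_nil : height [] = 0 := by
  have : (0 : ℕ) ∈ {k | wderiv^[k] ([] : List ℕ) = []} := by simp
  exact Nat.sInf_eq_zero.2 (Or.inl this)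

lemma height_eq_zero_iff (w : List ℕ) : height w = 0 ↔ w = [] := by
  constructor
  · intro h
    have hne : {k | wderiv^[k] w = []}.Nonempty := exists_iter_nil w
    have := Nat.sInf_mem hne
    rw [height] at h
    rw [h] at this
    simpa using this
  · rintro rfl; exact height_nil

lemma height_succ (w : List ℕ) (hw : w ≠ []) : height w = height (wderiv w) + 1 := by
  have hne' : {k | wderiv^[k] (wderiv w) = []}.Nonempty := exists_iter_nil (wderiv w)
  have hmem : height (wderiv w) + 1 ∈ {k | wderiv^[k] w = []} := by
    have := Nat.sInf_mem hne'
    rw [Set.mem_setOf_eq, Function.iterate_succ_apply]; exact this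
  have h1 : height w ≤ height (wderiv w) + 1 := Nat.sInf_le hmem
  have hne : {k | wderiv^[k] w = []}.Nonempty := exists_iter_nil w
  have hmem2 := Nat.sInf_mem hne
  have h0 : height w ≠ 0 := fun h => hw ((height_eq_zero_iff w).1 h)
  obtain ⟨m, hm⟩ : ∃ m, height w = m + 1 := ⟨height w - 1, by omega⟩
  have : wderiv^[m] (wderiv w) = [] := by
    have : wderiv^[height w] w = [] := hmem2
    rw [hm, Function.iterate_succ_apply] at this
    exact this
  have h2 : height (wderiv w) ≤ m := Nat.sInf_le this
  omega

/-! ### smooth basics -/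

lemma SmoothWord.deriv {w : List ℕ} (h : SmoothWord w) : SmoothWord (wderiv w) :=
  fun k => by simpa [Function.iterate_succ_apply] using h (k + 1)

lemma SmoothWord.word {w : List ℕ} (h : SmoothWord w) : IsWord w := (h 0).1

lemma SmoothWord.diff {w : List ℕ} (h : SmoothWord w) : Differentiable' w := h 0

lemma Pk_ne_nil {k : ℕ} (hk : 1 ≤ k) {u : List ℕ} (hu : u ∈ Pk k) : u ≠ [] := by
  rintro rfl
  have := hu.2
  rw [height_nil] at this
  omega

lemma wderiv_mem_Pk {k : ℕ} {u : List ℕ} (hu : u ∈ Pk (k + 1)) (hne : u ≠ []) :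
    wderiv u ∈ Pk k := by
  refine ⟨hu.1.deriv, ?_⟩
  have := height_succ u hne
  have h2 := hu.2
  omega

/-! ### key derivative computations -/

lemma no_triple_end {u : List ℕ} {a : ℕ} (ha : a = 1 ∨ a = 2)
    (h : SmoothWord (u ++ [a])) (hu : u.getLast? = some a)
    (hu2 : u.dropLast.getLast? = some a) : False := by
  obtain ⟨v, hv⟩ := List.getLast?_eq_some_iff.1 hu2
  have hud : u.dropLast ++ [a] = u := by
    obtain ⟨v', hv'⟩ := List.getLast?_eq_some_iff.1 hu
    rw [hv', dropLast_concat]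
  have hinf : [a, a, a] <:+: u ++ [a] := by
    refine ⟨v, [], ?_⟩
    rw [← hud, hv]
    simp
  have hd := h.diff
  rcases ha with rfl | rfl
  · exact hd.2.1 hinf
  · exact hd.2.2 hinf

lemma wderiv_single_run {v : List ℕ} {a : ℕ} (hv : v ≠ []) (hva : v.getLast? ≠ some a) :
    wderiv (v ++ [a]) = tIf1 (runLengths v) := by
  rw [wderiv_def, runLengths_concat_ne v a hva]
  obtain ⟨x, l, hxl⟩ := List.exists_cons_of_ne_nil hv
  rw [tIf1_append _ _ (by rw [hxl]; exact runLengths_ne_nil x l), dIf1_concat1]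

lemma wderiv_double_run {v : List ℕ} {a : ℕ} (hv : v ≠ []) (hva : v.getLast? ≠ some a) :
    wderiv (v ++ [a] ++ [a]) = tIf1 (runLengths v) ++ [2] := by
  obtain ⟨d, n, h1, h2⟩ := runLengths_concat_eq (v ++ [a]) a (getLast?_concat (l := v))
  rw [runLengths_concat_ne v a hva] at h1
  have hd : d = runLengths v ∧ n = 1 := by
    have := List.append_inj' h1.symm rfl
    constructor
    · exact this.1
    · simpa using this.2
  rw [wderiv_def, h2, hd.1, hd.2]
  obtain ⟨x, l, hxl⟩ := List.exists_cons_of_ne_nil hv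
  rw [tIf1_append _ _ (by rw [hxl]; exact runLengths_ne_nil x l), dIf1_concat2]

lemma wderiv_new_run {v : List ℕ} {a b : ℕ} (hv : v ≠ []) (hva : v.getLast? ≠ some a)
    (hab : b ≠ a) :
    wderiv (v ++ [a] ++ [b]) = tIf1 (runLengths v) ++ [1] := by
  have h1 : (v ++ [a]).getLast? ≠ some b := by
    rw [getLast?_concat]
    simpa using fun h => hab h.symm
  rw [wderiv_def, runLengths_concat_ne _ b h1, runLengths_concat_ne v a hva]
  obtain ⟨x, l, hxl⟩ := List.exists_cons_of_ne_nil hv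
  have hne : runLengths v ≠ [] := by rw [hxl]; exact runLengths_ne_nil x l
  rw [List.append_assoc, tIf1_append _ _ hne]
  rw [show tIf1 (runLengths v) ++ ([1] ++ [1]) = (tIf1 (runLengths v) ++ [1]) ++ [1] by simp,
    dIf1_concat1]

lemma wderiv_singleton (a : ℕ) : wderiv [a] = [] := by
  rw [wderiv_def, runLengths_singleton]
  rfl

lemma wderiv_double (a : ℕ) : wderiv [a, a] = [2] := by
  rw [wderiv_def]
  rw [show runLengths [a, a] = [2] from by rw [runLengths_cons_cons]; simp]
  rfl

/-! ### no double extension -/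

theorem no_double_ext : ∀ k : ℕ, ∀ u : List ℕ, u ∈ Pk k →
    u ++ [1] ∈ Pk k → u ++ [2] ∈ Pk k → False := by
  intro k
  induction k with
  | zero =>
    intro u _ h1 _
    have := (height_eq_zero_iff (u ++ [1])).1 h1.2
    simp at this
  | succ k ih =>
    intro u hu h1 h2
    have hune : u ≠ [] := Pk_ne_nil (by omega) hu
    obtain ⟨a, hua⟩ : ∃ a, u.getLast? = some a := by
      cases h : u.getLast?
      · rw [getLast?_eq_none_iff] at h; exact absurd h hune
      · exact ⟨_, rfl⟩
    have ha : a = 1 ∨ a = 2 := hu.1.word a (List.mem_of_getLast? hua)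
    -- u ++ [a] is in Pk (k+1)
    have hua' : u ++ [a] ∈ Pk (k + 1) := by rcases ha with rfl | rfl <;> assumption
    have hub' : u ++ [bar a] ∈ Pk (k + 1) := by
      rcases ha with rfl | rfl <;> simpa [bar] using (by assumption : _)
    have hbar : bar a ≠ a := by rcases ha with rfl | rfl <;> simp [bar]
    -- u ends with a single a
    have hv : u.dropLast.getLast? ≠ some a :=
      fun h => no_triple_end ha hua'.1 hua h
    obtain ⟨v, rfl⟩ := List.getLast?_eq_some_iff.1 hua
    rw [dropLast_concat] at hv
    rcases eq_or_ne v [] with rfl | hvne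
    · -- u = [a]
      simp only [nil_append] at *
      have hu1 : height [a] = 1 := by
        rw [height_succ [a] (by simp), wderiv_singleton, height_nil]
      have hk1 : k + 1 = 1 := by rw [← hu.2, hu1]
      have : wderiv^[height ([a] ++ [a])] ([a] ++ [a]) = [] :=
        Nat.sInf_mem (exists_iter_nil _)
      rw [hua'.2, hk1] at this
      simp only [Function.iterate_one] at this
      rw [show [a] ++ [a] = [a, a] from rfl, wderiv_double] at this
      simp at this
    · -- general case: reduce to k
      set T := tIf1 (runLengths v) with hT
      have hdu : wderiv (v ++ [a]) = T := wderiv_single_run hvne hv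
      have hda : wderiv (v ++ [a] ++ [a]) = T ++ [2] := wderiv_double_run hvne hv
      have hdb : wderiv (v ++ [a] ++ [bar a]) = T ++ [1] := wderiv_new_run hvne hv hbar
      have hT1 : T ∈ Pk k := hdu ▸ wderiv_mem_Pk hu (by simp)
      have hT2 : T ++ [2] ∈ Pk k := hda ▸ wderiv_mem_Pk hua' (by simp)
      have hT3 : T ++ [1] ∈ Pk k := hdb ▸ wderiv_mem_Pk hub' (by simp)
      exact ih T hT1 hT3 hT2

/-! ### length bound -/

def B : ℕ → ℕ
  | 0 => 0
  | k + 1 => 2 * B k + 4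

lemma length_le_B {w : List ℕ} (h : SmoothWord w) : w.length ≤ B (height w) := by
  suffices hh : ∀ n (w : List ℕ), w.length ≤ n → SmoothWord w → w.length ≤ B (height w) from
    hh w.length w le_rfl h
  intro n
  induction n with
  | zero => intro w hw _; simp [List.eq_nil_of_length_eq_zero (Nat.le_zero.1 hw)]
  | succ n ih =>
    intro w hw hs
    rcases eq_or_ne w [] with rfl | hne
    · simp
    · have hlt := length_wderiv_lt w hne
      have ihw := ih (wderiv w) (by omega) hs.deriv
      have hle2 : ∀ x ∈ runLengths w, x ≤ 2 :=
        runLengths_le_two hs.word hs.diff.2.1 hs.diff.2.2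
      have hsum : (runLengths w).sum ≤ (runLengths w).length * 2 := by
        calc (runLengths w).sum ≤ (runLengths w).length • 2 :=
              List.sum_le_card_nsmul _ 2 hle2
          _ = (runLengths w).length * 2 := by rw [smul_eq_mul]
      have hlen1 : (runLengths w).length ≤ (tIf1 (runLengths w)).length + 1 := by
        unfold tIf1; split
        · rw [List.length_tail]; omega
        · omega
      have hlen2 : (tIf1 (runLengths w)).length ≤ (dIf1 (tIf1 (runLengths w))).length + 1 := by
        unfold dIf1; split
        · rw [List.length_dropLast]; omega
        · omega
      have hwd : (wderiv w).length = (dIf1 (tIf1 (runLengths w))).length := by rw [wderiv_def]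
      have hws : w.length = (runLengths w).sum := (sum_runLengths w).symm
      have hh : height w = height (wderiv w) + 1 := height_succ w hne
      rw [hh]
      show w.length ≤ 2 * B (height (wderiv w)) + 4
      omega

lemma mem_Pk_length {k : ℕ} {u : List ℕ} (hu : u ∈ Pk k) : u.length ≤ B k := by
  have := length_le_B hu.1
  rwa [hu.2] at this

/-! ### SRE basics -/

lemma SRE.length {u v : List ℕ} (h : SRE u v) : v.length = u.length + 1 := by
  obtain ⟨α, _, rfl⟩ := h; simp

lemma SRE.eq_dropLast {u v : List ℕ} (h : SRE u v) : u = v.dropLast := by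
  obtain ⟨α, _, rfl⟩ := h; rw [dropLast_concat]

lemma SRE_dropLast {k : ℕ} (hk : 1 ≤ k) {u : List ℕ} (hu : u ∈ Pk k) :
    SRE u.dropLast u := by
  have hne : u ≠ [] := Pk_ne_nil hk hu
  obtain ⟨a, hua⟩ : ∃ a, u.getLast? = some a := by
    cases h : u.getLast?
    · rw [getLast?_eq_none_iff] at h; exact absurd h hne
    · exact ⟨_, rfl⟩
  have ha : a = 1 ∨ a = 2 := hu.1.word a (List.mem_of_getLast? hua)
  obtain ⟨v, rfl⟩ := List.getLast?_eq_some_iff.1 hua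
  exact ⟨a, ha, by rw [dropLast_concat]⟩

lemma sre_succ_unique {k : ℕ} {u v w : List ℕ} (hu : u ∈ Pk k) (hv : v ∈ Pk k)
    (hw : w ∈ Pk k) (h1 : SRE u v) (h2 : SRE u w) : v = w := by
  obtain ⟨α, hα, rfl⟩ := h1
  obtain ⟨β, hβ, rfl⟩ := h2
  rcases hα with rfl | rfl <;> rcases hβ with rfl | rfl
  · rfl
  · exact absurd (no_double_ext k u hu hv hw) not_false
  · exact absurd (no_double_ext k u hu hw hv) not_false
  · rfl

/-! ### right chains -/

open Classical in
noncomputable def nxt (k : ℕ) (u : List ℕ) : Option (List ℕ) :=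
  if h : ∃ v ∈ Pk k, SRE u v then some h.choose else none

lemma nxt_some {k : ℕ} {u v : List ℕ} (h : nxt k u = some v) : v ∈ Pk k ∧ SRE u v := by
  unfold nxt at h
  split at h
  · rename_i hex
    obtain ⟨h1, h2⟩ := hex.choose_spec
    cases h
    exact ⟨h1, h2⟩
  · cases h

lemma nxt_none {k : ℕ} {u : List ℕ} (h : nxt k u = none) :
    ∀ v ∈ Pk k, ¬ SRE u v := by
  unfold nxt at h
  split at h
  · cases h
  · rename_i hex
    intro v hv hsre
    exact hex ⟨v, hv, hsre⟩

lemma nxt_eq_some {k : ℕ} {u v : List ℕ} (hu : u ∈ Pk k) (hv : v ∈ Pk k)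
    (hsre : SRE u v) : nxt k u = some v := by
  unfold nxt
  rw [dif_pos ⟨v, hv, hsre⟩]
  congr 1
  have h := (⟨v, hv, hsre⟩ : ∃ v ∈ Pk k, SRE u v).choose_spec
  exact sre_succ_unique hu h.1 hv h.2 hsre

noncomputable def rchain (k : ℕ) : ℕ → List ℕ → List (List ℕ)
  | 0, u => [u]
  | n + 1, u =>
    match nxt k u with
    | none => [u]
    | some v => u :: rchain k n v

lemma rchain_head? (k n : ℕ) (u : List ℕ) : (rchain k n u).head? = some u := by
  cases n with
  | zero => rfl
  | succ n => rw [rchain]; cases nxt k u <;> rfl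

lemma rchain_ne_nil (k n : ℕ) (u : List ℕ) : rchain k n u ≠ [] := by
  intro h
  have := rchain_head? k n u
  rw [h] at this
  cases this

lemma rchain_mem (k : ℕ) : ∀ (n : ℕ) (u : List ℕ), u ∈ Pk k →
    ∀ x ∈ rchain k n u, x ∈ Pk k := by
  intro n
  induction n with
  | zero => intro u hu x hx; rw [rchain] at hx; simp at hx; rwa [hx]
  | succ n ih =>
    intro u hu x hx
    rw [rchain] at hx
    cases h : nxt k u with
    | none => rw [h] at hx; simp at hx; rwa [hx]
    | some v =>
      rw [h] at hx
      rcases mem_cons.1 hx with rfl | hx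
      · exact hu
      · exact ih v (nxt_some h).1 x hx

lemma rchain_chain' (k : ℕ) : ∀ (n : ℕ) (u : List ℕ), Chain' SRE (rchain k n u) := by
  intro n
  induction n with
  | zero => intro u; exact isChain_singleton u
  | succ n ih =>
    intro u
    rw [rchain]
    cases h : nxt k u with
    | none => exact isChain_singleton u
    | some v =>
      refine isChain_cons.2 ⟨?_, ih v⟩
      intro y hy
      rw [rchain_head? k n v] at hy
      cases hy
      exact (nxt_some h).2

lemma rchain_last_no_ext (k : ℕ) : ∀ (n : ℕ) (u : List ℕ), u ∈ Pk k →
    B k < u.length + n →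
    ∀ x, (rchain k n u).getLast? = some x → ∀ v ∈ Pk k, ¬ SRE x v := by
  intro n
  induction n with
  | zero =>
    intro u hu hlen x _ v _ _
    have := mem_Pk_length hu
    omega
  | succ n ih =>
    intro u hu hlen x hx v hv hsre
    cases h : nxt k u with
    | none =>
      simp only [rchain, h, getLast?_singleton, Option.some.injEq] at hx
      subst hx
      exact nxt_none h v hv hsre
    | some w =>
      simp only [rchain, h] at hx
      obtain ⟨y, t, hyt⟩ := List.exists_cons_of_ne_nil (rchain_ne_nil k n w)
      rw [hyt, getLast?_cons_cons, ← hyt] at hx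
      have hw := nxt_some h
      exact ih w hw.1 (by have := hw.2.length; omega) x hx v hv hsre

/-! ### left chains -/

open Classical in
noncomputable def lchain (k : ℕ) : ℕ → List ℕ → List (List ℕ)
  | 0, u => [u]
  | n + 1, u => if u.dropLast ∈ Pk k then lchain k n u.dropLast ++ [u] else [u]

lemma lchain_ne_nil (k n : ℕ) (u : List ℕ) : lchain k n u ≠ [] := by
  cases n with
  | zero => simp [lchain]
  | succ n => rw [lchain]; split <;> simp

lemma lchain_getLast? (k n : ℕ) (u : List ℕ) : (lchain k n u).getLast? = some u := by
  cases n with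
  | zero => rfl
  | succ n =>
    rw [lchain]
    split
    · exact getLast?_concat
    · rfl

lemma lchain_mem (k : ℕ) : ∀ (n : ℕ) (u : List ℕ), u ∈ Pk k →
    ∀ x ∈ lchain k n u, x ∈ Pk k := by
  intro n
  induction n with
  | zero => intro u hu x hx; simp [lchain] at hx; rwa [hx]
  | succ n ih =>
    intro u hu x hx
    rw [lchain] at hx
    split at hx
    · rename_i hd
      rcases mem_append.1 hx with hx | hx
      · exact ih _ hd x hx
      · rw [mem_singleton] at hx; rwa [hx]
    · rw [mem_singleton] at hx; rwa [hx]

lemma lchain_chain' (k : ℕ) (hk : 1 ≤ k) : ∀ (n : ℕ) (u : List ℕ), u ∈ Pk k →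
    Chain' SRE (lchain k n u) := by
  intro n
  induction n with
  | zero => intro u _; exact isChain_singleton u
  | succ n ih =>
    intro u hu
    rw [lchain]
    split
    · rename_i hd
      refine isChain_append.2 ⟨ih _ hd, isChain_singleton u, ?_⟩
      intro x hx y hy
      rw [lchain_getLast? k n u.dropLast] at hx
      simp only [head?_cons, Option.mem_some_iff] at hx hy
      subst hx; subst hy
      exact SRE_dropLast hk hu
    · exact isChain_singleton u

lemma lchain_head_no_pred (k : ℕ) (hk : 1 ≤ k) : ∀ (n : ℕ) (u : List ℕ), u ∈ Pk k →
    u.length ≤ n →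
    ∀ x, (lchain k n u).head? = some x → ∀ v ∈ Pk k, ¬ SRE v x := by
  intro n
  induction n with
  | zero =>
    intro u hu hlen x _ v _ _
    have : u = [] := List.eq_nil_of_length_eq_zero (Nat.le_zero.1 hlen)
    exact Pk_ne_nil hk hu this
  | succ n ih =>
    intro u hu hlen x hx v hv hsre
    rw [lchain] at hx
    split at hx
    · rename_i hd
      rw [head?_append_of_ne_nil _ (lchain_ne_nil k n u.dropLast)] at hx
      have hlen' : u.dropLast.length ≤ n := by
        rw [List.length_dropLast]
        have : u ≠ [] := Pk_ne_nil hk hu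
        have : 1 ≤ u.length := List.length_pos_iff.2 this
        omega
      exact ih u.dropLast hd hlen' x hx v hv hsre
    · rename_i hd
      simp only [head?_cons, Option.some.injEq] at hx
      subst hx
      exact hd (hsre.eq_dropLast ▸ hv)

/-! ### the canonical chain -/

noncomputable def cchain (k : ℕ) (u : List ℕ) : List (List ℕ) :=
  lchain k u.length u ++ (rchain k (B k + 1) u).tail

theorem cchain_spec {k : ℕ} (hk : 1 ≤ k) {u : List ℕ} (hu : u ∈ Pk k) :
    cchain k u ∈ Hset k ∧ u ∈ cchain k u := by
  have hlne := lchain_ne_nil k u.length u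
  have hrhead := rchain_head? k (B k + 1) u
  obtain ⟨r0, rt, hr⟩ := List.exists_cons_of_ne_nil (rchain_ne_nil k (B k + 1) u)
  have hr0 : u = r0 := by rw [hr] at hrhead; simpa using hrhead.symm
  subst hr0
  have htail : (rchain k (B k + 1) u).tail = rt := by rw [hr]; rfl
  have hmemu : u ∈ cchain k u :=
    mem_append.2 (Or.inl (List.mem_of_getLast? (lchain_getLast? k u.length u)))
  refine ⟨⟨?_, ?_, ?_, ?_, ?_⟩, hmemu⟩
  · -- nonempty
    intro h
    rw [cchain] at h
    exact hlne (List.append_eq_nil_iff.1 h).1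
  · -- members
    intro x hx
    rcases mem_append.1 hx with hx | hx
    · exact lchain_mem k u.length u hu x hx
    · rw [htail] at hx
      exact rchain_mem k (B k + 1) u hu x (by rw [hr]; exact mem_cons_of_mem _ hx)
  · -- chain'
    refine isChain_append.2 ⟨lchain_chain' k hk u.length u hu, ?_, ?_⟩
    · rw [htail]
      have := rchain_chain' k (B k + 1) u
      rw [hr] at this
      exact this.tail
    · intro x hx y hy
      rw [lchain_getLast? k u.length u] at hx
      simp only [Option.mem_some_iff] at hx
      subst hx
      have := rchain_chain' k (B k + 1) u
      rw [hr] at this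
      rw [htail] at hy
      exact (isChain_cons.1 this).1 y hy
  · -- head maximal
    intro v hv x hx
    rw [cchain, head?_append_of_ne_nil _ hlne] at hx
    exact lchain_head_no_pred k hk u.length u hu le_rfl x hx v hv
  · -- last maximal
    intro v hv x hx hsre
    rw [cchain] at hx
    cases h : nxt k u with
    | none =>
      have hrt : rt = [] := by
        have : rchain k (B k + 1) u = [u] := by simp [rchain, h]
        rw [this] at hr
        exact (List.cons.injEq _ _ _ _ ▸ hr).2.symm ▸ rfl
      rw [htail, hrt, append_nil, lchain_getLast? k u.length u] at hx
      cases hx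
      exact nxt_none h v hv hsre
    | some w =>
      have hrt : rt = rchain k (B k) w := by
        have : rchain k (B k + 1) u = u :: rchain k (B k) w := by simp [rchain, h]
        rw [this] at hr
        exact ((List.cons.injEq _ _ _ _ ▸ hr).2).symm
      have hrtne : rt ≠ [] := by rw [hrt]; exact rchain_ne_nil k (B k) w
      rw [htail, getLast?_append_of_ne_nil _ hrtne, hrt] at hx
      have hw := nxt_some h
      exact rchain_last_no_ext k (B k) w hw.1 (by have := hw.2.length; omega) x hx v hv hsre

/-! ### uniqueness -/

lemma forward_unique {k : ℕ} : ∀ (t₁ t₂ : List (List ℕ)) (u : List ℕ), u ∈ Pk k →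
    Chain' SRE (u :: t₁) → (∀ x ∈ u :: t₁, x ∈ Pk k) →
    (∀ v ∈ Pk k, ∀ x, (u :: t₁).getLast? = some x → ¬ SRE x v) →
    Chain' SRE (u :: t₂) → (∀ x ∈ u :: t₂, x ∈ Pk k) →
    (∀ v ∈ Pk k, ∀ x, (u :: t₂).getLast? = some x → ¬ SRE x v) →
    t₁ = t₂ := by
  intro t₁
  induction t₁ with
  | nil =>
    intro t₂ u hu _ _ hmax₁ hc₂ hm₂ _
    cases t₂ with
    | nil => rfl
    | cons v t₂' =>
      have hsre : SRE u v := (isChain_cons_cons.1 hc₂).1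
      have hv : v ∈ Pk k := hm₂ v (mem_cons_of_mem _ mem_cons_self)
      exact absurd hsre (hmax₁ v hv u rfl)
  | cons v₁ t₁' ih =>
    intro t₂ u hu hc₁ hm₁ hmax₁ hc₂ hm₂ hmax₂
    cases t₂ with
    | nil =>
      have hsre : SRE u v₁ := (isChain_cons_cons.1 hc₁).1
      have hv : v₁ ∈ Pk k := hm₁ v₁ (mem_cons_of_mem _ mem_cons_self)
      exact absurd hsre (hmax₂ v₁ hv u rfl)
    | cons v₂ t₂' =>
      have hs₁ : SRE u v₁ := (isChain_cons_cons.1 hc₁).1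
      have hs₂ : SRE u v₂ := (isChain_cons_cons.1 hc₂).1
      have hv₁ : v₁ ∈ Pk k := hm₁ v₁ (mem_cons_of_mem _ mem_cons_self)
      have hv₂ : v₂ ∈ Pk k := hm₂ v₂ (mem_cons_of_mem _ mem_cons_self)
      have heq : v₁ = v₂ := sre_succ_unique hu hv₁ hv₂ hs₁ hs₂
      subst heq
      have htails : t₁' = t₂' := by
        refine ih t₂' v₁ hv₁ (isChain_cons_cons.1 hc₁).2
          (fun x hx => hm₁ x (mem_cons_of_mem _ hx)) ?_
          (isChain_cons_cons.1 hc₂).2 (fun x hx => hm₂ x (mem_cons_of_mem _ hx)) ?_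
        · intro v hv x hx
          exact hmax₁ v hv x (by rwa [getLast?_cons_cons])
        · intro v hv x hx
          exact hmax₂ v hv x (by rwa [getLast?_cons_cons])
      rw [htails]

lemma backward_unique {k : ℕ} (hk : 1 ≤ k) : ∀ (s₁ s₂ : List (List ℕ)) (u : List ℕ),
    Chain' SRE (s₁ ++ [u]) → (∀ x ∈ s₁ ++ [u], x ∈ Pk k) →
    (∀ v ∈ Pk k, ∀ x, (s₁ ++ [u]).head? = some x → ¬ SRE v x) →
    Chain' SRE (s₂ ++ [u]) → (∀ x ∈ s₂ ++ [u], x ∈ Pk k) →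
    (∀ v ∈ Pk k, ∀ x, (s₂ ++ [u]).head? = some x → ¬ SRE v x) →
    s₁ = s₂ := by
  intro s₁
  induction s₁ using List.reverseRecOn with
  | nil =>
    intro s₂ u hc₁ hm₁ hmax₁ hc₂ hm₂ hmax₂
    rcases s₂.eq_nil_or_concat with rfl | ⟨s₂', w₂, rfl⟩
    · rfl
    · rw [List.concat_eq_append] at hc₂ hm₂ hmax₂
      have hsre : SRE w₂ u :=
        (isChain_append.1 hc₂).2.2 w₂ getLast?_concat u rfl
      have hw₂ : w₂ ∈ Pk k := hm₂ w₂ (by simp)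
      exact absurd hsre (hmax₁ w₂ hw₂ u rfl)
  | append_singleton s₁' w₁ ih =>
    intro s₂ u hc₁ hm₁ hmax₁ hc₂ hm₂ hmax₂
    have hs₁ : SRE w₁ u :=
      (isChain_append.1 hc₁).2.2 w₁ getLast?_concat u rfl
    have hw₁ : w₁ ∈ Pk k := hm₁ w₁ (by simp)
    rcases s₂.eq_nil_or_concat with rfl | ⟨s₂', w₂, rfl⟩
    · exact absurd hs₁ (hmax₂ w₁ hw₁ u rfl)
    · rw [List.concat_eq_append] at hc₂ hm₂ hmax₂
      have hs₂ : SRE w₂ u :=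
        (isChain_append.1 hc₂).2.2 w₂ getLast?_concat u rfl
      have hw₂ : w₂ ∈ Pk k := hm₂ w₂ (by simp)
      have heq : w₁ = w₂ := by rw [hs₁.eq_dropLast, hs₂.eq_dropLast]
      subst heq
      have hne₁ : s₁' ++ [w₁] ≠ ([] : List (List ℕ)) := by simp
      have hne₂ : s₂' ++ [w₁] ≠ ([] : List (List ℕ)) := by simp
      have hmain : s₁' = s₂' := by
        refine ih s₂' w₁
          (hc₁.prefix ⟨[u], rfl⟩)
          (fun x hx => hm₁ x (mem_append.2 (Or.inl hx)))
          ?_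
          (hc₂.prefix ⟨[u], rfl⟩)
          (fun x hx => hm₂ x (mem_append.2 (Or.inl hx)))
          ?_
        · intro v hv x hx
          refine hmax₁ v hv x ?_
          rw [head?_append_of_ne_nil _ hne₁]
          exact hx
        · intro v hv x hx
          refine hmax₂ v hv x ?_
          rw [head?_append_of_ne_nil _ hne₂]
          exact hx
      rw [hmain, List.concat_eq_append]

lemma chain_unique {k : ℕ} (hk : 1 ≤ k) {c₁ c₂ : List (List ℕ)} (hc₁ : c₁ ∈ Hset k)
    (hc₂ : c₂ ∈ Hset k) {u : List ℕ} (hu₁ : u ∈ c₁) (hu₂ : u ∈ c₂) : c₁ = c₂ := by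
  obtain ⟨_, hmem₁, hch₁, hhead₁, hlast₁⟩ := hc₁
  obtain ⟨_, hmem₂, hch₂, hhead₂, hlast₂⟩ := hc₂
  obtain ⟨s₁, t₁, rfl⟩ := List.append_of_mem hu₁
  obtain ⟨s₂, t₂, rfl⟩ := List.append_of_mem hu₂
  have hu : u ∈ Pk k := hmem₁ u hu₁
  have ht : t₁ = t₂ := by
    refine forward_unique t₁ t₂ u hu
      (hch₁.suffix ⟨s₁, rfl⟩)
      (fun x hx => hmem₁ x (mem_append.2 (Or.inr hx)))
      (fun v hv x hx => hlast₁ v hv x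
        (by rw [getLast?_append_of_ne_nil _ (cons_ne_nil u t₁)]; exact hx))
      (hch₂.suffix ⟨s₂, rfl⟩)
      (fun x hx => hmem₂ x (mem_append.2 (Or.inr hx)))
      (fun v hv x hx => hlast₂ v hv x
        (by rw [getLast?_append_of_ne_nil _ (cons_ne_nil u t₂)]; exact hx))
  have hassoc₁ : s₁ ++ u :: t₁ = (s₁ ++ [u]) ++ t₁ := by simp
  have hassoc₂ : s₂ ++ u :: t₂ = (s₂ ++ [u]) ++ t₂ := by simp
  have hhd₁ : (s₁ ++ u :: t₁).head? = (s₁ ++ [u]).head? := by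
    cases s₁ with
    | nil => rfl
    | cons a s => rw [head?_append_of_ne_nil _ (cons_ne_nil a s),
        head?_append_of_ne_nil _ (cons_ne_nil a s)]
  have hhd₂ : (s₂ ++ u :: t₂).head? = (s₂ ++ [u]).head? := by
    cases s₂ with
    | nil => rfl
    | cons a s => rw [head?_append_of_ne_nil _ (cons_ne_nil a s),
        head?_append_of_ne_nil _ (cons_ne_nil a s)]
  have hs : s₁ = s₂ := by
    refine backward_unique hk s₁ s₂ u
      (hch₁.prefix ⟨t₁, hassoc₁.symm⟩)
      (fun x hx => hmem₁ x (by
        rcases mem_append.1 hx with hx | hx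
        · exact mem_append.2 (Or.inl hx)
        · rw [mem_singleton] at hx; subst hx; exact hu₁))
      (fun v hv x hx => hhead₁ v hv x (by rw [hhd₁]; exact hx))
      (hch₂.prefix ⟨t₂, hassoc₂.symm⟩)
      (fun x hx => hmem₂ x (by
        rcases mem_append.1 hx with hx | hx
        · exact mem_append.2 (Or.inl hx)
        · rw [mem_singleton] at hx; subst hx; exact hu₂))
      (fun v hv x hx => hhead₂ v hv x (by rw [hhd₂]; exact hx))
  rw [hs, ht]


/-- Every smooth word of height `k` either extends on the right by a letter within
`P^k(ε)` or is the last member of its MRSE chain; and each smooth word of height `k`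
belongs to exactly one MRSE chain of height `k`. -/
theorem stmt7 (k : ℕ) (hk : 1 ≤ k) :
    (∀ u ∈ Pk k, (∃ α, (α = 1 ∨ α = 2) ∧ u ++ [α] ∈ Pk k) ∨
      (∀ c ∈ Hset k, u ∈ c → c.getLast? = some u)) ∧
    (∀ u ∈ Pk k, ∃! c, c ∈ Hset k ∧ u ∈ c) := by
  constructor
  · intro u hu
    by_cases h : ∃ α, (α = 1 ∨ α = 2) ∧ u ++ [α] ∈ Pk k
    · exact Or.inl h
    · refine Or.inr ?_
      intro c hc huc
      obtain ⟨_, hmem, hch, _, _⟩ := hc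
      obtain ⟨s, t, rfl⟩ := List.append_of_mem huc
      cases t with
      | nil => rw [getLast?_append_of_ne_nil _ (cons_ne_nil u [])]; rfl
      | cons v t' =>
        exfalso
        have hsre : SRE u v := (isChain_cons_cons.1 (hch.suffix ⟨s, rfl⟩)).1
        have hv : v ∈ Pk k := hmem v (mem_append.2 (Or.inr (mem_cons_of_mem _ mem_cons_self)))
        obtain ⟨α, hα, rfl⟩ := hsre
        exact h ⟨α, hα, hv⟩
  · intro u hu
    obtain ⟨hcc, hmemcc⟩ := cchain_spec hk hu
    exact ⟨cchain k u, ⟨hcc, hmemcc⟩, fun c hc => chain_unique hk hc.1 hcc hc.2 hmemcc⟩
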